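/- Let r, s be positive integers. There exists c = c(r,s) > 0 such that the following holds for every ε_0 > 0. Let H be an r-uniform hypergraph with disjoint vertex subsets U_1,…,U_L, and suppose H contains no focused copy of a member of M(r,s) with respect to this partition. Let G be an r-uniform hypergraph on [L] such that every edge {i_1,…,i_r} of G satisfies d_H(U_{i_1},…,U_{i_r}) ≤ ε_0. Then for each i ∈ [L] there exists V_i ⊆ U_i with |V_i| ≥ (1 − c·ε_0^{1/r!})·|U_i| such that (V_{i_1},…,V_{i_r}) spans no edge of H for every edge {i_1,…,i_r} of G. -/

import Mathlib

open Finset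
set_option maxHeartbeats 1000000
set_option linter.unusedSectionVars false

attribute [local instance 10] Classical.propDecidable

section Cleaning

variable {V : Type} [Fintype V] [DecidableEq V]

/-- `Y` (crossing the parts in `P`) is `α`-heavy: some completion `Q` of `P` to an edge of
`G` admits more than `α ∏_{q ∈ Q} |U q|` crossing edges of `E` containing `Y`. -/
private def hvy {L : ℕ} (U : Fin L → Finset V) (E : Finset (Finset V))
    (G : Set (Finset (Fin L))) (α : ℝ) (Y : Finset V) (P : Finset (Fin L)) : Prop :=
  ∃ Q : Finset (Fin L), Disjoint P Q ∧ (P ∪ Q) ∈ G ∧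
    α * ∏ q ∈ Q, ((U q).card : ℝ) <
      ((E.filter (fun e => Y ⊆ e ∧ ∀ p ∈ P ∪ Q, (e ∩ U p).card = 1)).card : ℝ)

/-- The deletion set at level `(α, β)` inside part `m`. -/
private noncomputable def Sdel {L : ℕ} (U : Fin L → Finset V) (E : Finset (Finset V))
    (G : Set (Finset (Fin L))) (α β : ℝ) (m : Fin L) : Finset V :=
  (U m).filter (fun z => ∃ (P : Finset (Fin L)) (Y : Finset V),
    m ∉ P ∧ z ∉ Y ∧ ¬ hvy U E G α Y P ∧ hvy U E G β (insert z Y) (insert m P))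

private lemma Sdel_subset {L : ℕ} (U : Fin L → Finset V) (E : Finset (Finset V))
    (G : Set (Finset (Fin L))) (α β : ℝ) (m : Fin L) : Sdel U E G α β m ⊆ U m :=
  filter_subset _ _

private lemma cross_eq_biUnion {L r : ℕ} {U : Fin L → Finset V}
    (hU : ∀ i j : Fin L, i ≠ j → Disjoint (U i) (U j))
    {g : Finset (Fin L)} (hg : g.card = r) {e : Finset V} (he : e.card = r)
    (hcross : ∀ p ∈ g, (e ∩ U p).card = 1) :
    g.biUnion (fun p => e ∩ U p) = e := by
  apply Finset.eq_of_subset_of_card_le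
  · intro v hv
    obtain ⟨p, _, hv⟩ := Finset.mem_biUnion.1 hv
    exact (Finset.mem_inter.1 hv).1
  · rw [Finset.card_biUnion]
    · rw [Finset.sum_congr rfl hcross, Finset.sum_const, smul_eq_mul, mul_one, hg, he]
    · intro p hp q hq hpq
      exact Finset.disjoint_left.2 fun v hv1 hv2 =>
        Finset.disjoint_left.1 (hU p q hpq) (Finset.mem_inter.1 hv1).2
          (Finset.mem_inter.1 hv2).2

private lemma cross_le_one {L r : ℕ} {U : Fin L → Finset V}
    (hU : ∀ i j : Fin L, i ≠ j → Disjoint (U i) (U j))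
    {g : Finset (Fin L)} (hg : g.card = r) {e : Finset V} (he : e.card = r)
    (hcross : ∀ p ∈ g, (e ∩ U p).card = 1) :
    ∀ l' : Fin L, (e ∩ U l').card ≤ 1 := by
  intro l'
  by_cases hl' : l' ∈ g
  · exact (hcross l' hl').le
  · have : e ∩ U l' = ∅ := by
      rw [Finset.eq_empty_iff_forall_notMem]
      intro v hv
      have hve : v ∈ e := (Finset.mem_inter.1 hv).1
      have := cross_eq_biUnion hU hg he hcross
      rw [← this] at hve
      obtain ⟨p, hp, hvp⟩ := Finset.mem_biUnion.1 hve
      exact Finset.disjoint_left.1 (hU p l' (fun h => hl' (h ▸ hp)))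
        (Finset.mem_inter.1 hvp).2 (Finset.mem_inter.1 hv).2
    simp [this]

private lemma exists_sigma {L r : ℕ} {g : Finset (Fin L)} (hg : g.card = r) :
    ∃ σ : Fin r → Fin L, Function.Injective σ ∧ Finset.image σ Finset.univ = g := by
  refine ⟨fun j => g.orderEmbOfFin hg j, fun a b hab => (g.orderEmbOfFin hg).injective hab, ?_⟩
  ext x
  simp only [Finset.mem_image, Finset.mem_univ, true_and]
  constructor
  · rintro ⟨j, rfl⟩; exact Finset.orderEmbOfFin_mem g hg j
  · intro hx
    have := Finset.range_orderEmbOfFin g hg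
    have hx' : x ∈ Set.range (g.orderEmbOfFin hg) := by rw [this]; exact hx
    obtain ⟨j, hj⟩ := hx'
    exact ⟨j, hj⟩


private lemma arith1 {a c al be ga x y : ℝ} (h1 : a * (ga * x) ≤ c) (h2 : c ≤ al * (x * y))
    (h3 : al ≤ be * ga) (hx : 0 < x) (hy : 0 ≤ y) (hga : 0 < ga) : a ≤ be * y := by
  have hxy : 0 ≤ x * y := mul_nonneg hx.le hy
  have h4 : a * (ga * x) ≤ (be * ga) * (x * y) :=
    h1.trans (h2.trans (mul_le_mul_of_nonneg_right h3 hxy))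
  have h5 : (be * ga) * (x * y) = (be * y) * (ga * x) := by ring
  rw [h5] at h4
  exact le_of_mul_le_mul_right h4 (mul_pos hga hx)

/-- Selection lemma: if `Y∪{z}` is `β`-heavy but `Y` is not `α`-heavy (with `α ≤ βγ`), then
there is an edge `insert z Z` of `E` through `z`, crossing an edge `g` of `G`, such that
`Z` has fewer than `γ|U m|` extensions into `U m`. -/
private lemma pick_good {L r : ℕ} {U : Fin L → Finset V} {E : Finset (Finset V)}
    {G : Set (Finset (Fin L))}
    (hE : ∀ e ∈ E, e.card = r)
    (hU : ∀ i j : Fin L, i ≠ j → Disjoint (U i) (U j))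
    {α β γ : ℝ} (hγ : 0 < γ) (hαβ : α ≤ β * γ)
    {m : Fin L} {z : V} (hz : z ∈ U m) {P : Finset (Fin L)} {Y : Finset V}
    (hmP : m ∉ P) (hzY : z ∉ Y)
    (hlight : ¬ hvy U E G α Y P) (hheavy : hvy U E G β (insert z Y) (insert m P)) :
    ∃ (Z : Finset V) (g : Finset (Fin L)), g ∈ G ∧ Z.card = r - 1 ∧ z ∉ Z ∧
      insert z Z ∈ E ∧ (∀ p ∈ g, ((insert z Z) ∩ U p).card = 1) ∧
      (((U m).filter (fun v => insert v Z ∈ E)).card : ℝ) < γ * ((U m).card : ℝ) := by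
  obtain ⟨Q, hdisj, hG, hlt⟩ := hheavy
  obtain ⟨hmQ, hPQ⟩ := Finset.disjoint_insert_left.1 hdisj
  set g : Finset (Fin L) := insert m P ∪ Q with hg_def
  have hunion : P ∪ insert m Q = g := by
    rw [Finset.union_insert, hg_def, Finset.insert_union]
  have hmg : m ∈ g := Finset.mem_union_left _ (Finset.mem_insert_self _ _)
  -- the light bound
  simp only [hvy, not_exists, not_and, not_lt] at hlight
  have hdisj' : Disjoint P (insert m Q) :=
    Finset.disjoint_insert_right.2 ⟨hmP, hPQ⟩
  have hF' := hlight (insert m Q) hdisj' (by rw [hunion]; exact hG)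
  rw [Finset.prod_insert hmQ] at hF'
  rw [hunion] at hF'
  set F : Finset (Finset V) :=
    E.filter (fun e => insert z Y ⊆ e ∧ ∀ p ∈ g, (e ∩ U p).card = 1) with hF_def
  set F' : Finset (Finset V) :=
    E.filter (fun e => Y ⊆ e ∧ ∀ p ∈ g, (e ∩ U p).card = 1) with hF'_def
  -- key structural facts about members of F
  have hFfacts : ∀ e ∈ F, z ∈ e ∧ Y ⊆ e.erase z ∧ e ∩ U m = {z} := by
    intro e heF
    rw [hF_def, Finset.mem_filter] at heF
    obtain ⟨heE, hsub, hcr⟩ := heF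
    have hze : z ∈ e := hsub (Finset.mem_insert_self _ _)
    have hYe : Y ⊆ e := (Finset.subset_insert _ _).trans hsub
    refine ⟨hze, Finset.subset_erase.2 ⟨hYe, hzY⟩, ?_⟩
    have h1 : (e ∩ U m).card = 1 := hcr m hmg
    obtain ⟨a, ha⟩ := Finset.card_eq_one.1 h1
    have hza : z ∈ e ∩ U m := Finset.mem_inter.2 ⟨hze, hz⟩
    rw [ha] at hza ⊢
    rw [Finset.mem_singleton.1 hza]
  -- bad edges: those whose Z-part has many extensions into U m
  set Bad : Finset (Finset V) :=
    F.filter (fun e => γ * ((U m).card : ℝ) ≤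
      (((U m).filter (fun v => insert v (e.erase z) ∈ E)).card : ℝ)) with hBad_def
  have hBadF : Bad ⊆ F := Finset.filter_subset _ _
  -- injection from the sigma set into F'
  have hinj : (Bad.sigma (fun e => (U m).filter (fun v => insert v (e.erase z) ∈ E))).card
      ≤ F'.card := by
    apply Finset.card_le_card_of_injOn (fun a => insert a.2 (a.1.erase z))
    · rintro ⟨e, v⟩ ha
      rw [Finset.mem_coe, Finset.mem_sigma] at ha
      obtain ⟨heB, hv⟩ := ha
      have heF := hBadF heB
      obtain ⟨hvU, hvE⟩ := Finset.mem_filter.1 hv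
      obtain ⟨hze, hYe, hem⟩ := hFfacts e heF
      rw [hF_def, Finset.mem_filter] at heF
      obtain ⟨heE, hsub, hcr⟩ := heF
      rw [Finset.mem_coe, hF'_def, Finset.mem_filter]
      refine ⟨hvE, hYe.trans (Finset.subset_insert _ _), ?_⟩
      intro p hp
      by_cases hpm : p = m
      · subst hpm
        have herase : e.erase z ∩ U p = ∅ := by
          rw [Finset.eq_empty_iff_forall_notMem]
          intro w hw
          have hw1 : w ∈ e ∩ U p := Finset.mem_inter.2
            ⟨Finset.erase_subset _ _ (Finset.mem_inter.1 hw).1, (Finset.mem_inter.1 hw).2⟩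
          rw [hem] at hw1
          exact Finset.notMem_erase z e ((Finset.mem_singleton.1 hw1) ▸ (Finset.mem_inter.1 hw).1)
        rw [Finset.insert_inter_of_mem hvU, herase]
        simp
      · have hvnp : v ∉ U p := fun hvp =>
          Finset.disjoint_left.1 (hU m p (fun h => hpm (h.symm))) hvU hvp
        rw [Finset.insert_inter_of_notMem hvnp]
        have hznp : z ∉ U p := fun hzp =>
          Finset.disjoint_left.1 (hU m p (fun h => hpm (h.symm))) hz hzp
        have : e.erase z ∩ U p = e ∩ U p := by
          ext w
          simp only [Finset.mem_inter, Finset.mem_erase]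
          constructor
          · rintro ⟨⟨_, hw⟩, hw2⟩; exact ⟨hw, hw2⟩
          · rintro ⟨hw, hw2⟩
            exact ⟨⟨fun h => hznp (h ▸ hw2), hw⟩, hw2⟩
        rw [this]
        exact hcr p hp
    · rintro ⟨e, v⟩ ha ⟨e', v'⟩ ha' heq
      rw [Finset.mem_coe, Finset.mem_sigma] at ha ha'
      obtain ⟨heB, hv⟩ := ha
      obtain ⟨heB', hv'⟩ := ha'
      obtain ⟨hvU, _⟩ := Finset.mem_filter.1 hv
      obtain ⟨hvU', _⟩ := Finset.mem_filter.1 hv'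
      obtain ⟨hze, _, hem⟩ := hFfacts e (hBadF heB)
      obtain ⟨hze', _, hem'⟩ := hFfacts e' (hBadF heB')
      have hemz : e.erase z ∩ U m = ∅ := by
        rw [Finset.eq_empty_iff_forall_notMem]
        intro w hw
        have hw1 : w ∈ e ∩ U m := Finset.mem_inter.2
          ⟨Finset.erase_subset _ _ (Finset.mem_inter.1 hw).1, (Finset.mem_inter.1 hw).2⟩
        rw [hem] at hw1
        exact Finset.notMem_erase z e ((Finset.mem_singleton.1 hw1) ▸ (Finset.mem_inter.1 hw).1)
      have hemz' : e'.erase z ∩ U m = ∅ := by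
        rw [Finset.eq_empty_iff_forall_notMem]
        intro w hw
        have hw1 : w ∈ e' ∩ U m := Finset.mem_inter.2
          ⟨Finset.erase_subset _ _ (Finset.mem_inter.1 hw).1, (Finset.mem_inter.1 hw).2⟩
        rw [hem'] at hw1
        exact Finset.notMem_erase z e' ((Finset.mem_singleton.1 hw1) ▸ (Finset.mem_inter.1 hw).1)
      have hvnotin : v ∉ e.erase z := fun h =>
        (Finset.eq_empty_iff_forall_notMem.1 hemz v) (Finset.mem_inter.2 ⟨h, hvU⟩)
      have hvnotin' : v' ∉ e'.erase z := fun h =>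
        (Finset.eq_empty_iff_forall_notMem.1 hemz' v') (Finset.mem_inter.2 ⟨h, hvU'⟩)
      have heq' : insert v (e.erase z) = insert v' (e'.erase z) := by simpa using heq
      -- recover v from the image
      have hvv' : v = v' := by
        have h1 : insert v (e.erase z) ∩ U m = {v} := by
          rw [Finset.insert_inter_of_mem hvU, hemz]
          simp
        have h2 : insert v' (e'.erase z) ∩ U m = {v'} := by
          rw [Finset.insert_inter_of_mem hvU', hemz']
          simp
        have h12 : insert v (e.erase z) ∩ U m = {v'} := by rw [heq', h2]
        exact Finset.singleton_injective (h1.symm.trans h12)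
      subst hvv'
      have hee' : e = e' := by
        have h3 : e.erase z = e'.erase z := by
          have := congrArg (fun t => Finset.erase t v) heq'
          simpa [Finset.erase_insert hvnotin, Finset.erase_insert hvnotin'] using this
        have := congrArg (insert z) h3
        rwa [Finset.insert_erase hze, Finset.insert_erase hze'] at this
      subst hee'
      rfl
  -- counting
  have hUm : (0 : ℝ) < ((U m).card : ℝ) :=
    Nat.cast_pos.2 (Finset.card_pos.2 ⟨z, hz⟩)
  have hcount : (Bad.card : ℝ) * (γ * ((U m).card : ℝ)) ≤ (F'.card : ℝ) := by
    have h1 := Finset.card_nsmul_le_sum Bad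
      (fun e => (((U m).filter (fun v => insert v (e.erase z) ∈ E)).card : ℝ))
      (γ * ((U m).card : ℝ))
      (fun e he => (Finset.mem_filter.1 he).2)
    rw [nsmul_eq_mul] at h1
    have h2 : (∑ e ∈ Bad, (((U m).filter (fun v => insert v (e.erase z) ∈ E)).card : ℝ))
        = (((Bad.sigma (fun e => (U m).filter (fun v => insert v (e.erase z) ∈ E))).card : ℕ) : ℝ) := by
      rw [Finset.card_sigma, Nat.cast_sum]
    rw [h2] at h1
    exact h1.trans (Nat.cast_le.2 hinj)
  have hprodQ : (0 : ℝ) ≤ ∏ q ∈ Q, ((U q).card : ℝ) :=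
    Finset.prod_nonneg fun q _ => Nat.cast_nonneg _
  have hBadcard : (Bad.card : ℝ) ≤ β * ∏ q ∈ Q, ((U q).card : ℝ) :=
    arith1 hcount hF' hαβ hUm hprodQ hγ
  have hBadlt : Bad.card < F.card :=
    Nat.cast_lt.1 (lt_of_le_of_lt hBadcard hlt)
  have hex : ∃ e ∈ F, e ∉ Bad := by
    by_contra hcon
    push_neg at hcon
    exact absurd (Finset.card_le_card hcon) (not_le.2 hBadlt)
  obtain ⟨e, heF0, heBad⟩ := hex
  obtain ⟨hze, hYe, hem⟩ := hFfacts e heF0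
  have heF := heF0
  rw [hF_def, Finset.mem_filter] at heF
  obtain ⟨heE, hsub, hcr⟩ := heF
  refine ⟨e.erase z, g, hG, ?_, Finset.notMem_erase _ _, ?_, ?_, ?_⟩
  · rw [Finset.card_erase_of_mem hze, hE e heE]
  · rwa [Finset.insert_erase hze]
  · rw [Finset.insert_erase hze]; exact hcr
  · rw [hBad_def, Finset.mem_filter] at heBad
    push_neg at heBad
    exact heBad heF0

private lemma arith2 {S a γu tR sR : ℝ} (hb : (sR - 1) * γu < S) (hA : S - tR * γu ≤ a)
    (ht : tR + 1 ≤ sR) (h0 : 0 ≤ γu) : 0 < a := by nlinarith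

private lemma arith3 {SSc a af an dd γu tR : ℝ} (hA : SSc - tR * γu ≤ a)
    (hsplit : af + an = a) (hle : af ≤ dd) (hdd : dd < γu) :
    SSc - (tR + 1) * γu ≤ an := by nlinarith

/-- The deletion sets are small: greedy covering using the absence of focused copies. -/
private lemma S_small {L r s : ℕ} {U : Fin L → Finset V} {E : Finset (Finset V)}
    {G : Set (Finset (Fin L))}
    (hE : ∀ e ∈ E, e.card = r)
    (hU : ∀ i j : Fin L, i ≠ j → Disjoint (U i) (U j))
    (hGcard : ∀ g ∈ G, g.card = r)
    (hM : ¬ ∃ (Z : Fin s → Finset V) (z : Fin s → V) (l : Fin L),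
        (∀ i, (Z i).card = r - 1) ∧ (∀ i, z i ∈ U l) ∧ (∀ i, z i ∉ Z i) ∧
        (∀ i, insert (z i) (Z i) ∈ E) ∧
        (∀ i i' : Fin s, i < i' → insert (z i') (Z i) ∉ E) ∧
        (∀ i, ∀ l' : Fin L, ((insert (z i) (Z i)) ∩ U l').card ≤ 1))
    {α β γ : ℝ} (hγ : 0 < γ) (hαβ : α ≤ β * γ) (m : Fin L) :
    ((Sdel U E G α β m).card : ℝ) ≤ ((s : ℝ) - 1) * (γ * ((U m).card : ℝ)) := by
  by_contra hb
  push_neg at hb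
  set SS := Sdel U E G α β m with hSS
  have hSU : SS ⊆ U m := Sdel_subset U E G α β m
  have hγU : (0:ℝ) ≤ γ * ((U m).card : ℝ) := mul_nonneg hγ.le (Nat.cast_nonneg _)
  have key : ∀ t : ℕ, t ≤ s → ∃ (Z : Fin t → Finset V) (z : Fin t → V),
      (∀ i, (Z i).card = r - 1) ∧ (∀ i, z i ∈ SS) ∧ (∀ i, z i ∉ Z i) ∧
      (∀ i, insert (z i) (Z i) ∈ E) ∧
      (∀ i i', i < i' → insert (z i') (Z i) ∉ E) ∧
      (∀ i l', ((insert (z i) (Z i)) ∩ U l').card ≤ 1) ∧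
      ((SS.card : ℝ) - t * (γ * ((U m).card : ℝ)) ≤
        ((SS.filter (fun v => ∀ i, insert v (Z i) ∉ E)).card : ℝ)) := by
    intro t
    induction t with
    | zero =>
      intro _
      refine ⟨fun i => i.elim0, fun i => i.elim0, fun i => i.elim0, fun i => i.elim0,
        fun i => i.elim0, fun i => i.elim0, fun i _ _ => i.elim0, fun i => i.elim0, ?_⟩
      have hfil : SS.filter
          (fun v => ∀ i : Fin 0, insert v ((fun i : Fin 0 => i.elim0) i) ∉ E) = SS :=
        Finset.filter_true_of_mem (fun v _ => fun i => i.elim0)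
      rw [hfil, Nat.cast_zero, zero_mul, sub_zero]
    | succ t ih =>
      intro hts
      obtain ⟨Z, z, hZc, hzS, hzZ, hins, hpair, hfoc, hA⟩ := ih (Nat.le_of_succ_le hts)
      set A := SS.filter (fun v => ∀ i, insert v (Z i) ∉ E) with hAdef
      have ht' : ((t : ℝ) + 1) ≤ (s : ℝ) := by
        have := (Nat.cast_le (α := ℝ)).2 hts
        rwa [Nat.cast_add, Nat.cast_one] at this
      have hApos : (0:ℝ) < (A.card : ℝ) := arith2 hb hA ht' hγU
      obtain ⟨z', hz'A⟩ := Finset.card_pos.1 (Nat.cast_pos.1 hApos)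
      have hz'SS : z' ∈ SS := (Finset.mem_filter.1 hz'A).1
      have hz'avoid : ∀ i, insert z' (Z i) ∉ E := (Finset.mem_filter.1 hz'A).2
      have hz'mem := hz'SS
      rw [hSS] at hz'mem
      simp only [Sdel, Finset.mem_filter] at hz'mem
      obtain ⟨hz'U, P₀, Y₀, hmP₀, hzY₀, hlight, hheavy⟩ := hz'mem
      obtain ⟨Z', g', hg'G, hZ'c, hz'Z', hins', hcr', hdeg'⟩ :=
        pick_good hE hU hγ hαβ hz'U hmP₀ hzY₀ hlight hheavy
      have hfoc' : ∀ l', ((insert z' Z') ∩ U l').card ≤ 1 :=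
        cross_le_one hU (hGcard g' hg'G) (hE _ hins') hcr'
      refine ⟨Fin.snoc Z Z', Fin.snoc z z', ?_, ?_, ?_, ?_, ?_, ?_, ?_⟩
      · intro i
        refine Fin.lastCases ?_ ?_ i
        · rw [Fin.snoc_last]; exact hZ'c
        · intro j; rw [Fin.snoc_castSucc]; exact hZc j
      · intro i
        refine Fin.lastCases ?_ ?_ i
        · rw [Fin.snoc_last]; exact hz'SS
        · intro j; rw [Fin.snoc_castSucc]; exact hzS j
      · intro i
        refine Fin.lastCases ?_ ?_ i
        · rw [Fin.snoc_last, Fin.snoc_last]; exact hz'Z'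
        · intro j; rw [Fin.snoc_castSucc, Fin.snoc_castSucc]; exact hzZ j
      · intro i
        refine Fin.lastCases ?_ ?_ i
        · rw [Fin.snoc_last, Fin.snoc_last]; exact hins'
        · intro j; rw [Fin.snoc_castSucc, Fin.snoc_castSucc]; exact hins j
      · intro i i' hlt
        have hine : i ≠ Fin.last t := by
          intro h
          rw [h] at hlt
          exact absurd hlt (not_lt.2 (Fin.le_last i'))
        obtain ⟨j, hj⟩ := Fin.exists_castSucc_eq.2 hine
        rcases Fin.eq_castSucc_or_eq_last i' with ⟨j', hj'⟩ | hj'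
        · rw [← hj, hj', Fin.snoc_castSucc, Fin.snoc_castSucc]
          apply hpair
          rw [← hj, hj'] at hlt
          exact Fin.castSucc_lt_castSucc_iff.1 hlt
        · rw [← hj, hj', Fin.snoc_castSucc, Fin.snoc_last]
          exact hz'avoid j
      · intro i l'
        refine Fin.lastCases ?_ ?_ i
        · rw [Fin.snoc_last, Fin.snoc_last]; exact hfoc' l'
        · intro j; rw [Fin.snoc_castSucc, Fin.snoc_castSucc]; exact hfoc j l'
      · have hAA : SS.filter (fun v => ∀ i : Fin (t+1),
            insert v ((Fin.snoc Z Z' : Fin (t+1) → Finset V) i) ∉ E)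
            = A.filter (fun v => insert v Z' ∉ E) := by
          rw [hAdef, Finset.filter_filter]
          apply Finset.filter_congr
          intro v _
          constructor
          · intro h
            refine ⟨fun i => ?_, ?_⟩
            · have := h i.castSucc; rwa [Fin.snoc_castSucc] at this
            · have := h (Fin.last t); rwa [Fin.snoc_last] at this
          · rintro ⟨h1, h2⟩ i
            refine Fin.lastCases ?_ ?_ i
            · rwa [Fin.snoc_last]
            · intro j; rw [Fin.snoc_castSucc]; exact h1 j
        rw [hAA]
        have hsplit := Finset.card_filter_add_card_filter_not
          (s := A) (p := fun v => insert v Z' ∈ E)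
        have hsubfil : A.filter (fun v => insert v Z' ∈ E)
            ⊆ (U m).filter (fun v => insert v Z' ∈ E) :=
          Finset.filter_subset_filter _ ((Finset.filter_subset _ _).trans hSU)
        have c1 : ((A.filter (fun v => insert v Z' ∈ E)).card : ℝ)
            + ((A.filter (fun v => ¬ insert v Z' ∈ E)).card : ℝ) = (A.card : ℝ) := by
          rw [← Nat.cast_add, hsplit]
        have c2 : ((A.filter (fun v => insert v Z' ∈ E)).card : ℝ)
            ≤ (((U m).filter (fun v => insert v Z' ∈ E)).card : ℝ) :=
          Nat.cast_le.2 (Finset.card_le_card hsubfil)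
        have hfin := arith3 hA c1 c2 hdeg'
        rw [Nat.cast_add, Nat.cast_one]
        exact hfin
  obtain ⟨Z, z, hZc, hzS, hzZ, hins, hpair, hfoc, _⟩ := key s le_rfl
  exact hM ⟨Z, z, m, hZc, fun i => hSU (hzS i), hzZ, hins, hpair, hfoc⟩

/-! ### Threshold functions -/

private noncomputable def alf (ε₀ : ℝ) (r : ℕ) (j : ℕ) : ℝ :=
  2 * ε₀ * (4 * ε₀) ^ (-(j : ℝ) / (r : ℝ))

private noncomputable def delf (ε₀ : ℝ) (r : ℕ) : ℝ := (4 * ε₀) ^ ((1 : ℝ) / (r : ℝ))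

private lemma alpha_zero (ε₀ : ℝ) (r : ℕ) : alf ε₀ r 0 = 2 * ε₀ := by
  simp [alf]

private lemma delta_pos {ε₀ : ℝ} (hε : 0 < ε₀) (r : ℕ) : 0 < delf ε₀ r := by
  unfold delf; positivity

private lemma alpha_rel {ε₀ : ℝ} (hε : 0 < ε₀) {r : ℕ} (hr : 0 < r) (j : ℕ) :
    alf ε₀ r j = alf ε₀ r (j + 1) * delf ε₀ r := by
  unfold alf delf
  have hx : (0 : ℝ) < 4 * ε₀ := by positivity
  have hrne : (r : ℝ) ≠ 0 := Nat.cast_ne_zero.2 hr.ne'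
  have h : ((4 * ε₀) ^ (-((j : ℝ) + 1) / (r : ℝ))) * (4 * ε₀) ^ ((1 : ℝ) / (r : ℝ))
      = (4 * ε₀) ^ (-(j : ℝ) / (r : ℝ)) := by
    rw [← Real.rpow_add hx]
    congr 1
    field_simp
    ring
  push_cast
  conv_rhs => rw [mul_assoc]
  rw [h]

private lemma alpha_r_lt_one {ε₀ : ℝ} (hε : 0 < ε₀) {r : ℕ} (hr : 0 < r) :
    alf ε₀ r r < 1 := by
  unfold alf
  have hrne : (r : ℝ) ≠ 0 := Nat.cast_ne_zero.2 hr.ne'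
  rw [show -(r : ℝ) / (r : ℝ) = -1 by field_simp, Real.rpow_neg_one]
  have hεne : ε₀ ≠ 0 := hε.ne'
  rw [show (2 : ℝ) * ε₀ * (4 * ε₀)⁻¹ = 1 / 2 by field_simp; ring]
  norm_num

private lemma delta_le {ε₀ : ℝ} (hε : 0 < ε₀) (hε1 : ε₀ ≤ 1) {r : ℕ} (hr : 0 < r) :
    delf ε₀ r ≤ 4 * ε₀ ^ ((1 : ℝ) / (r.factorial : ℝ)) := by
  unfold delf
  rw [Real.mul_rpow (by norm_num) hε.le]
  have hrR : (1 : ℝ) ≤ (r : ℝ) := by exact_mod_cast hr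
  have h1 : (4 : ℝ) ^ ((1 : ℝ) / (r : ℝ)) ≤ 4 := by
    have := Real.rpow_le_rpow_of_exponent_le (by norm_num : (1:ℝ) ≤ 4)
      (by rw [div_le_one (by linarith)]; linarith : (1 : ℝ) / (r : ℝ) ≤ 1)
    rwa [Real.rpow_one] at this
  have h2 : ε₀ ^ ((1 : ℝ) / (r : ℝ)) ≤ ε₀ ^ ((1 : ℝ) / (r.factorial : ℝ)) := by
    apply Real.rpow_le_rpow_of_exponent_ge hε hε1
    apply one_div_le_one_div_of_le (by linarith)
    exact_mod_cast Nat.self_le_factorial r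
  have h3 : (0 : ℝ) ≤ ε₀ ^ ((1 : ℝ) / (r : ℝ)) := Real.rpow_nonneg hε.le _
  exact mul_le_mul h1 h2 h3 (by norm_num)

/-! ### Global deletion set -/

private noncomputable def Ddel {L : ℕ} (U : Fin L → Finset V) (E : Finset (Finset V))
    (G : Set (Finset (Fin L))) (ε₀ : ℝ) (r : ℕ) (m : Fin L) : Finset V :=
  (Finset.range r).biUnion fun j => Sdel U E G (alf ε₀ r j) (alf ε₀ r (j + 1)) m

private lemma Ddel_subset {L : ℕ} (U : Fin L → Finset V) (E : Finset (Finset V))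
    (G : Set (Finset (Fin L))) (ε₀ : ℝ) (r : ℕ) (m : Fin L) :
    Ddel U E G ε₀ r m ⊆ U m :=
  Finset.biUnion_subset.2 fun j _ => Sdel_subset U E G _ _ m

private lemma arith5 {e p : ℝ} (he : 0 < e) (hp : 0 ≤ p) : e * p ≤ 2 * e * p := by nlinarith

/-- After deleting `Ddel` from each part, no crossing edge survives. -/
private lemma no_cross {L r : ℕ} (hr : 0 < r) {ε₀ : ℝ} (hε : 0 < ε₀)
    {U : Fin L → Finset V} {E : Finset (Finset V)} {G : Set (Finset (Fin L))}
    (hE : ∀ e ∈ E, e.card = r)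
    (hU : ∀ i j : Fin L, i ≠ j → Disjoint (U i) (U j))
    (hden' : ∀ g' ∈ G, ((E.filter (fun e => ∀ p ∈ g', (e ∩ U p).card = 1)).card : ℝ)
        ≤ ε₀ * ∏ p ∈ g', ((U p).card : ℝ))
    {g : Finset (Fin L)} (hg : g ∈ G) (hgr : g.card = r) {e : Finset V} (heE : e ∈ E)
    (hcW : ∀ p ∈ g, (e ∩ (U p \ Ddel U E G ε₀ r p)).card = 1) : False := by
  have h1 : ∀ p ∈ g, 1 ≤ (e ∩ U p).card := by
    intro p hp
    have h := hcW p hp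
    have hsub : e ∩ (U p \ Ddel U E G ε₀ r p) ⊆ e ∩ U p :=
      Finset.inter_subset_inter (subset_refl e) Finset.sdiff_subset
    exact h ▸ Finset.card_le_card hsub
  have hdisjfam : ∀ p ∈ g, ∀ q ∈ g, p ≠ q → Disjoint (e ∩ U p) (e ∩ U q) := by
    intro p _ q _ hpq
    exact Finset.disjoint_left.2 fun v hv1 hv2 =>
      Finset.disjoint_left.1 (hU p q hpq) (Finset.mem_inter.1 hv1).2 (Finset.mem_inter.1 hv2).2
  have hsum : ∑ p ∈ g, (e ∩ U p).card ≤ e.card := by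
    rw [← Finset.card_biUnion hdisjfam]
    refine Finset.card_le_card ?_
    intro v hv
    obtain ⟨p, _, hvp⟩ := Finset.mem_biUnion.1 hv
    exact (Finset.mem_inter.1 hvp).1
  have hcrossU : ∀ p ∈ g, (e ∩ U p).card = 1 := by
    intro p hp
    by_contra hne
    have h2 : 1 < (e ∩ U p).card := lt_of_le_of_ne (h1 p hp) (Ne.symm hne)
    have hlt : ∑ _p ∈ g, 1 < ∑ p ∈ g, (e ∩ U p).card :=
      Finset.sum_lt_sum h1 ⟨p, hp, h2⟩
    rw [Finset.sum_const, smul_eq_mul, mul_one] at hlt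
    have her : e.card = r := hE e heE
    omega
  have chain : ∀ k : ℕ, ∀ P : Finset (Fin L), P ⊆ g → P.card = k →
      ¬ hvy U E G (alf ε₀ r k) (e ∩ P.biUnion U) P := by
    intro k
    induction k with
    | zero =>
      intro P hPg hP0
      rw [Finset.card_eq_zero] at hP0
      subst hP0
      intro hh
      obtain ⟨Q, hdisjQ, hQG, hlt⟩ := hh
      rw [Finset.empty_union] at hQG hlt
      have hYempty : e ∩ (∅ : Finset (Fin L)).biUnion U = ∅ := by simp
      rw [hYempty] at hlt
      have heq : E.filter (fun e' => (∅ : Finset V) ⊆ e' ∧ ∀ p ∈ Q, (e' ∩ U p).card = 1)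
          = E.filter (fun e' => ∀ p ∈ Q, (e' ∩ U p).card = 1) :=
        Finset.filter_congr (fun x _ => by simp)
      rw [heq, alpha_zero] at hlt
      have hp0 : (0 : ℝ) ≤ ∏ p ∈ Q, ((U p).card : ℝ) :=
        Finset.prod_nonneg fun q _ => Nat.cast_nonneg _
      exact absurd hlt (not_lt.2 ((hden' Q hQG).trans (arith5 hε hp0)))
    | succ k ih =>
      intro P hPg hPk hheavy
      obtain ⟨p, hpP⟩ := Finset.card_pos.1 (by omega : 0 < P.card)
      have hpg : p ∈ g := hPg hpP
      have hP'g : P.erase p ⊆ g := (Finset.erase_subset p P).trans hPg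
      have hP'k : (P.erase p).card = k := by
        rw [Finset.card_erase_of_mem hpP, hPk]
        omega
      obtain ⟨v, hv⟩ := Finset.card_eq_one.1 (hcrossU p hpg)
      have hvin : v ∈ e ∩ U p := by rw [hv]; exact Finset.mem_singleton_self v
      have hvU : v ∈ U p := (Finset.mem_inter.1 hvin).2
      have hvnotY : v ∉ e ∩ (P.erase p).biUnion U := by
        intro hmem
        obtain ⟨q, hq, hvq⟩ := Finset.mem_biUnion.1 (Finset.mem_inter.1 hmem).2
        exact Finset.disjoint_left.1 (hU q p (Finset.ne_of_mem_erase hq)) hvq hvU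
      have hYins : insert v (e ∩ (P.erase p).biUnion U) = e ∩ P.biUnion U := by
        conv_rhs => rw [← Finset.insert_erase hpP]
        rw [Finset.biUnion_insert, Finset.inter_union_distrib_left, hv,
          ← Finset.insert_eq]
      have hPins : insert p (P.erase p) = P := Finset.insert_erase hpP
      have hvS : v ∈ Sdel U E G (alf ε₀ r k) (alf ε₀ r (k + 1)) p := by
        simp only [Sdel, Finset.mem_filter]
        refine ⟨hvU, P.erase p, e ∩ (P.erase p).biUnion U, Finset.notMem_erase p P,
          hvnotY, ih _ hP'g hP'k, ?_⟩
        rw [hYins, hPins]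
        exact hheavy
      have hkr : k < r := by
        have := Finset.card_le_card hPg
        omega
      have hvD : v ∈ Ddel U E G ε₀ r p :=
        Finset.mem_biUnion.2 ⟨k, Finset.mem_range.2 hkr, hvS⟩
      obtain ⟨w, hw⟩ := Finset.card_eq_one.1 (hcW p hpg)
      have hwin : w ∈ e ∩ (U p \ Ddel U E G ε₀ r p) := by
        rw [hw]; exact Finset.mem_singleton_self w
      have hwv : w = v := by
        have hw2 : w ∈ e ∩ U p := Finset.mem_inter.2
          ⟨(Finset.mem_inter.1 hwin).1, (Finset.mem_sdiff.1 (Finset.mem_inter.1 hwin).2).1⟩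
        rw [hv] at hw2
        exact Finset.mem_singleton.1 hw2
      exact (Finset.mem_sdiff.1 (Finset.mem_inter.1 hwin).2).2 (hwv ▸ hvD)
  have hbi := cross_eq_biUnion hU hgr (hE e heE) hcrossU
  have hesub : e ⊆ g.biUnion U := by
    intro v hv
    rw [← hbi] at hv
    obtain ⟨p, hp, hvp⟩ := Finset.mem_biUnion.1 hv
    exact Finset.mem_biUnion.2 ⟨p, hp, (Finset.mem_inter.1 hvp).2⟩
  apply chain r g (subset_refl g) hgr
  rw [Finset.inter_eq_left.2 hesub]
  refine ⟨∅, Finset.disjoint_empty_right _, by rwa [Finset.union_empty], ?_⟩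
  rw [Finset.prod_empty, mul_one, Finset.union_empty]
  have hmem : e ∈ E.filter (fun e' => e ⊆ e' ∧ ∀ p ∈ g, (e' ∩ U p).card = 1) :=
    Finset.mem_filter.2 ⟨heE, subset_refl e, hcrossU⟩
  have h1le : (1 : ℝ) ≤
      ((E.filter (fun e' => e ⊆ e' ∧ ∀ p ∈ g, (e' ∩ U p).card = 1)).card : ℝ) :=
    Nat.one_le_cast.2 (Finset.card_pos.2 ⟨e, hmem⟩)
  exact lt_of_lt_of_le (alpha_r_lt_one hε hr) h1le

end Cleaning

private lemma arith4 {rr ss del X u w dd : ℝ} (hr1 : 1 ≤ rr) (hs1 : 1 ≤ ss)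
    (hw : u - dd ≤ w) (hd : dd ≤ rr * ((ss - 1) * (del * u))) (hdel : del ≤ 4 * X)
    (hdelpos : 0 ≤ del) (hX : 0 ≤ X) (hu : 0 ≤ u) :
    (1 - (4 * rr * ss + 1) * X) * u ≤ w := by
  have h1 : 0 ≤ rr * (ss - 1) * u :=
    mul_nonneg (mul_nonneg (by linarith) (by linarith)) hu
  have h2 : 0 ≤ X * u := mul_nonneg hX hu
  nlinarith [mul_nonneg (sub_nonneg.2 hdel) h1, mul_nonneg (mul_nonneg hX hu) (by linarith : (0:ℝ) ≤ rr)]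

private lemma arith6 {rr ss X u : ℝ} (hX : 1 ≤ X) (hrr : 0 ≤ rr) (hss : 0 ≤ ss)
    (hu : 0 ≤ u) : (1 - (4 * rr * ss + 1) * X) * u ≤ 0 := by
  have h1 : 0 ≤ rr * ss := mul_nonneg hrr hss
  have h2 : 1 ≤ (4 * rr * ss + 1) * X := by nlinarith
  have h3 : 1 - (4 * rr * ss + 1) * X ≤ 0 := by linarith
  exact mul_nonpos_of_nonpos_of_nonneg h3 hu

/-- Cleaning lemma: in an r-uniform hypergraph with no focused copy of a member of
M(r,s), sparse r-tuples of parts can be made empty by deleting few vertices. -/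
theorem stmt_15 (r s : ℕ) (hr : 0 < r) (hs : 0 < s) :
    ∃ c : ℝ, 0 < c ∧
      ∀ (ε₀ : ℝ), 0 < ε₀ →
      ∀ (V : Type) [Fintype V] [DecidableEq V]
        (E : Finset (Finset V)), (∀ e ∈ E, e.card = r) →
      ∀ (L : ℕ) (U : Fin L → Finset V), (∀ i j, i ≠ j → Disjoint (U i) (U j)) →
      -- no focused copy of a member of M(r,s)
      (¬ ∃ (Z : Fin s → Finset V) (z : Fin s → V) (l : Fin L),
        (∀ i, (Z i).card = r - 1) ∧ (∀ i, z i ∈ U l) ∧ (∀ i, z i ∉ Z i) ∧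
        (∀ i, insert (z i) (Z i) ∈ E) ∧
        (∀ i i' : Fin s, i < i' → insert (z i') (Z i) ∉ E) ∧
        (∀ i, ∀ l' : Fin L, ((insert (z i) (Z i)) ∩ U l').card ≤ 1)) →
      ∀ (G : Set (Finset (Fin L))), (∀ g ∈ G, g.card = r) →
      (∀ g ∈ G, ∀ σ : Fin r → Fin L, Function.Injective σ →
        Finset.image σ Finset.univ = g →
        ((E.filter (fun e => ∀ j, (e ∩ U (σ j)).card = 1)).card : ℝ) ≤
          ε₀ * ∏ j, ((U (σ j)).card : ℝ)) →
      ∃ W : Fin L → Finset V,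
        (∀ i, W i ⊆ U i ∧
          (1 - c * ε₀ ^ ((1 : ℝ) / (r.factorial : ℝ))) * ((U i).card : ℝ) ≤
            ((W i).card : ℝ)) ∧
        (∀ g ∈ G, ∀ σ : Fin r → Fin L, Function.Injective σ →
          Finset.image σ Finset.univ = g →
          E.filter (fun e => ∀ j, (e ∩ W (σ j)).card = 1) = ∅) := by
  refine ⟨4 * (r : ℝ) * (s : ℝ) + 1, by positivity, ?_⟩
  intro ε₀ hε V _ _ E hE L U hU hM G hGcard hden
  have hr1 : (1 : ℝ) ≤ (r : ℝ) := by exact_mod_cast hr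
  have hs1 : (1 : ℝ) ≤ (s : ℝ) := by exact_mod_cast hs
  by_cases hε1 : ε₀ ≤ 1
  · -- main case
    have hden' : ∀ g' ∈ G, ((E.filter (fun e => ∀ p ∈ g', (e ∩ U p).card = 1)).card : ℝ)
        ≤ ε₀ * ∏ p ∈ g', ((U p).card : ℝ) := by
      intro g' hg'
      obtain ⟨σ, hinj, him⟩ := exists_sigma (hGcard g' hg')
      have hb := hden g' hg' σ hinj him
      have hfe : E.filter (fun e => ∀ j, (e ∩ U (σ j)).card = 1)
          = E.filter (fun e => ∀ p ∈ g', (e ∩ U p).card = 1) := by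
        apply Finset.filter_congr
        intro e _
        constructor
        · intro h p hp
          rw [← him] at hp
          obtain ⟨j, _, rfl⟩ := Finset.mem_image.1 hp
          exact h j
        · intro h j
          exact h (σ j) (by rw [← him]; exact Finset.mem_image_of_mem σ (Finset.mem_univ j))
      have hpe : (∏ j, ((U (σ j)).card : ℝ)) = ∏ p ∈ g', ((U p).card : ℝ) := by
        rw [← him, Finset.prod_image (fun a _ b _ h => hinj h)]
      rw [hfe, hpe] at hb
      exact hb
    refine ⟨fun m => U m \ Ddel U E G ε₀ r m, ?_, ?_⟩
    · intro i
      refine ⟨Finset.sdiff_subset, ?_⟩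
      have hDsub : Ddel U E G ε₀ r i ⊆ U i := Ddel_subset U E G ε₀ r i
      have hwge : ((U i).card : ℝ) - ((Ddel U E G ε₀ r i).card : ℝ)
          ≤ (((U i \ Ddel U E G ε₀ r i)).card : ℝ) := by
        rw [Finset.card_sdiff_of_subset hDsub, Nat.cast_sub (Finset.card_le_card hDsub)]
      have hdle : ((Ddel U E G ε₀ r i).card : ℝ)
          ≤ (r : ℝ) * (((s : ℝ) - 1) * (delf ε₀ r * ((U i).card : ℝ))) := by
        have h1 : (Ddel U E G ε₀ r i).card ≤ ∑ j ∈ Finset.range r,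
            (Sdel U E G (alf ε₀ r j) (alf ε₀ r (j + 1)) i).card :=
          Finset.card_biUnion_le
        have h2 : ((Ddel U E G ε₀ r i).card : ℝ) ≤ ∑ j ∈ Finset.range r,
            ((Sdel U E G (alf ε₀ r j) (alf ε₀ r (j + 1)) i).card : ℝ) := by
          rw [← Nat.cast_sum]
          exact Nat.cast_le.2 h1
        refine h2.trans ?_
        have h3 : ∀ j ∈ Finset.range r,
            ((Sdel U E G (alf ε₀ r j) (alf ε₀ r (j + 1)) i).card : ℝ)
            ≤ ((s : ℝ) - 1) * (delf ε₀ r * ((U i).card : ℝ)) :=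
          fun j _ => S_small hE hU hGcard hM (delta_pos hε r)
            (le_of_eq (alpha_rel hε hr j)) i
        have h4 := Finset.sum_le_card_nsmul _ _ _ h3
        rw [Finset.card_range, nsmul_eq_mul] at h4
        exact h4
      exact arith4 hr1 hs1 hwge hdle (delta_le hε hε1 hr) (delta_pos hε r).le
        (Real.rpow_nonneg hε.le _) (Nat.cast_nonneg _)
    · intro g hg σ hσ him
      rw [Finset.filter_eq_empty_iff]
      intro e heE hcWj
      have hcW : ∀ p ∈ g, (e ∩ (U p \ Ddel U E G ε₀ r p)).card = 1 := by
        intro p hp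
        rw [← him] at hp
        obtain ⟨j, _, rfl⟩ := Finset.mem_image.1 hp
        exact hcWj j
      exact no_cross hr hε hE hU hden' hg (hGcard g hg) heE hcW
  · -- ε₀ > 1 : take W = ∅
    push_neg at hε1
    refine ⟨fun _ => ∅, ?_, ?_⟩
    · intro i
      refine ⟨Finset.empty_subset _, ?_⟩
      have hX : (1 : ℝ) ≤ ε₀ ^ ((1 : ℝ) / (r.factorial : ℝ)) :=
        Real.one_le_rpow hε1.le (one_div_nonneg.2 (Nat.cast_nonneg _))
      rw [Finset.card_empty, Nat.cast_zero]
      exact arith6 hX (by linarith) (by linarith) (Nat.cast_nonneg _)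
    · intro g hg σ hσ him
      rw [Finset.filter_eq_empty_iff]
      intro e heE h
      have := h ⟨0, hr⟩
      simp at this
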